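/- The only subspaces of R invariant under all of the operators E_n, H_n, F_n (n ∈ ℤ) are {0} and R itself if and only if J ≠ 0. (This is the K = 0 quotient of the Bernard–Felder realization: the quotient module is irreducible if and only if J ≠ 0.) -/

import Mathlib

open MvPolynomial

/-- The ring `R = ℂ[x_m : m ∈ ℤ]`. -/
abbrev RSpace : Type := MvPolynomial ℤ ℂ

/-- `F_n` : multiplication by `x_n`.  (Applied to each polynomial, all the sums
appearing below are finite, so `∑ᶠ` computes the intended operators.) -/
noncomputable def Fop (n : ℤ) : RSpace → RSpace := fun q => X n * q

/-- `H_n = −2 Σ_{m∈ℤ} x_{n+m} ∂_m + δ_{n,0} J · id`. -/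
noncomputable def Hop (J : ℂ) (n : ℤ) : RSpace → RSpace := fun q =>
  -((2 : ℂ) • ∑ᶠ m : ℤ, X (n + m) * pderiv m q) + (if n = 0 then J else 0) • q

/-- `E_n = −Σ_{m,k∈ℤ} x_{n+m+k} ∂_m ∂_k + J ∂_{−n}`. -/
noncomputable def Eop (J : ℂ) (n : ℤ) : RSpace → RSpace := fun q =>
  -(∑ᶠ mk : ℤ × ℤ, X (n + mk.1 + mk.2) * pderiv mk.1 (pderiv mk.2 q))
    + J • pderiv (-n) q

namespace BFaux

lemma coeff_pderiv (m : ℤ) (σ : ℤ →₀ ℕ) (q : RSpace) :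
    coeff σ (pderiv m q) = ((σ m : ℂ) + 1) * coeff (σ + Finsupp.single m 1) q := by
  induction q using MvPolynomial.induction_on' with
  | monomial d a =>
    rw [pderiv_monomial, coeff_monomial, coeff_monomial]
    by_cases h : d = σ + Finsupp.single m 1
    · subst h
      rw [if_pos (add_tsub_cancel_right σ (Finsupp.single m 1)), if_pos rfl]
      have hv : (σ + Finsupp.single m 1 : ℤ →₀ ℕ) m = σ m + 1 := by
        simp [Finsupp.add_apply, Finsupp.single_apply]
      rw [hv]
      push_cast
      ring
    · rw [if_neg h]
      by_cases h2 : d - Finsupp.single m 1 = σ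
      · rw [if_pos h2]
        have hdm : d m = 0 := by
          by_contra hdm
          apply h
          have hle : Finsupp.single m 1 ≤ d := Finsupp.single_le_iff.2 (by omega)
          rw [← h2, tsub_add_cancel_of_le hle]
        rw [hdm]
        push_cast
        ring
      · rw [if_neg h2, mul_zero]
  | add p r hp hr =>
    simp only [map_add, coeff_add, hp, hr]
    ring

lemma coeff_eq_zero_of_not_mem_vars {q : RSpace} {σ : ℤ →₀ ℕ} {M : ℤ}
    (hM : M ∉ q.vars) (hσ : σ M ≠ 0) : coeff σ q = 0 := by
  by_contra h
  exact hM ((mem_vars M).2 ⟨σ, mem_support_iff.2 h, Finsupp.mem_support_iff.2 hσ⟩)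

lemma coeff_pderiv_pderiv (m k : ℤ) (σ : ℤ →₀ ℕ) (q : RSpace) :
    coeff σ (pderiv m (pderiv k q))
      = ((σ m : ℂ) + 1) * ((((σ + Finsupp.single m 1 : ℤ →₀ ℕ) k : ℕ) : ℂ) + 1)
          * coeff (σ + Finsupp.single m 1 + Finsupp.single k 1) q := by
  rw [coeff_pderiv, coeff_pderiv]
  ring

lemma pderiv_pderiv_eq_zero {q : RSpace} {m k : ℤ} (h : m ∉ q.vars ∨ k ∉ q.vars) :
    pderiv m (pderiv k q) = 0 := by
  rw [MvPolynomial.eq_zero_iff]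
  intro σ
  rw [coeff_pderiv_pderiv]
  rcases h with h | h
  · rw [coeff_eq_zero_of_not_mem_vars h (σ := σ + Finsupp.single m 1 + Finsupp.single k 1)
      (by simp [Finsupp.add_apply, Finsupp.single_apply]), mul_zero]
  · rw [coeff_eq_zero_of_not_mem_vars h (σ := σ + Finsupp.single m 1 + Finsupp.single k 1)
      (by simp [Finsupp.add_apply, Finsupp.single_apply]), mul_zero]


/-- the total degree of an exponent vector -/
def dsum (σ : ℤ →₀ ℕ) : ℕ := σ.sum fun _ e => e

lemma dsum_add_single (σ : ℤ →₀ ℕ) (m : ℤ) :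
    dsum (σ + Finsupp.single m 1) = dsum σ + 1 := by
  unfold dsum
  rw [Finsupp.sum_add_index' (fun _ => rfl) (fun _ _ _ => rfl),
    Finsupp.sum_single_index rfl]

lemma dsum_sub_single {σ : ℤ →₀ ℕ} {s : ℤ} (hs : s ∈ σ.support) :
    dsum (σ - Finsupp.single s 1) + 1 = dsum σ := by
  have hle : Finsupp.single s 1 ≤ σ :=
    Finsupp.single_le_iff.2 (by have := Finsupp.mem_support_iff.1 hs; omega)
  conv_rhs => rw [← tsub_add_cancel_of_le hle]
  rw [dsum_add_single]

lemma Eop_coeff (J : ℂ) (n : ℤ) (q : RSpace) (τ : ℤ →₀ ℕ) :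
    coeff τ (Eop J n q)
      = -(∑ mk ∈ q.vars ×ˢ q.vars,
            coeff τ (X (n + mk.1 + mk.2) * pderiv mk.1 (pderiv mk.2 q)))
        + J * ((τ (-n) : ℂ) + 1) * coeff (τ + Finsupp.single (-n) 1) q := by
  simp only [Eop]
  rw [finsum_eq_sum_of_support_subset _
      (s := q.vars ×ˢ q.vars) ?_]
  · rw [coeff_add, coeff_neg, coeff_sum, coeff_smul, coeff_pderiv, smul_eq_mul]
    ring
  · intro mk hmk
    simp only [Function.mem_support] at hmk
    simp only [Finset.coe_product, Set.mem_prod, Finset.mem_coe]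
    by_contra hc
    rw [not_and_or] at hc
    exact hmk (by rw [pderiv_pderiv_eq_zero hc, mul_zero])

lemma totalDegree_Eop_lt {J : ℂ} {n : ℤ} {q : RSpace} (h : Eop J n q ≠ 0) :
    (Eop J n q).totalDegree < q.totalDegree := by
  have key : ∀ τ : ℤ →₀ ℕ, coeff τ (Eop J n q) ≠ 0 → dsum τ < q.totalDegree := by
    intro τ hτ
    rw [Eop_coeff] at hτ
    by_contra hge
    push_neg at hge
    apply hτ
    have h2 : coeff (τ + Finsupp.single (-n) 1) q = 0 := by
      by_contra hc
      have hle := le_totalDegree (mem_support_iff.2 hc)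
      change dsum _ ≤ _ at hle
      rw [dsum_add_single] at hle
      omega
    have h1 : ∀ mk ∈ q.vars ×ˢ q.vars,
        coeff τ (X (n + mk.1 + mk.2) * pderiv mk.1 (pderiv mk.2 q)) = 0 := by
      intro mk _
      rw [coeff_X_mul']
      split_ifs with hmem
      · rw [coeff_pderiv_pderiv]
        have hz : coeff (τ - Finsupp.single (n + mk.1 + mk.2) 1
            + Finsupp.single mk.1 1 + Finsupp.single mk.2 1) q = 0 := by
          by_contra hc
          have hle := le_totalDegree (mem_support_iff.2 hc)
          change dsum _ ≤ _ at hle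
          rw [dsum_add_single, dsum_add_single] at hle
          have := dsum_sub_single hmem
          omega
        rw [hz, mul_zero]
      · rfl
    rw [Finset.sum_eq_zero h1, h2, mul_zero, neg_zero, zero_add]
  obtain ⟨τ0, hτ0⟩ := MvPolynomial.ne_zero_iff.1 h
  have hpos : 0 < q.totalDegree := lt_of_le_of_lt (Nat.zero_le _) (key τ0 hτ0)
  rw [totalDegree]
  exact (Finset.sup_lt_iff hpos).2 fun b hb => key b (mem_support_iff.1 hb)


lemma claim1 {J : ℂ} {q : RSpace} (hE : ∀ n, Eop J n q = 0) (τ' : ℤ →₀ ℕ) (u : ℤ) :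
    (∑ mk ∈ q.vars ×ˢ q.vars,
        if mk.1 + mk.2 = u then coeff τ' (pderiv mk.1 (pderiv mk.2 q)) else 0) = 0 := by
  obtain ⟨M, hM⟩ : ∃ M : ℤ, M ∉ q.vars := Infinite.exists_notMem_finset q.vars
  have h0 := Eop_coeff J (M - u) q (τ' + Finsupp.single M 1)
  rw [hE, coeff_zero] at h0
  have h2 : coeff (τ' + Finsupp.single M 1 + Finsupp.single (-(M - u)) 1) q = 0 := by
    refine coeff_eq_zero_of_not_mem_vars hM ?_
    have : (τ' + Finsupp.single M 1 + Finsupp.single (-(M-u)) 1 : ℤ →₀ ℕ) M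
        = τ' M + 1 + (Finsupp.single (-(M-u)) 1 : ℤ →₀ ℕ) M := by
      simp [Finsupp.add_apply]
    omega
  rw [h2, mul_zero] at h0
  have hsum : (∑ mk ∈ q.vars ×ˢ q.vars,
      coeff (τ' + Finsupp.single M 1)
        (X (M - u + mk.1 + mk.2) * pderiv mk.1 (pderiv mk.2 q))) = 0 := by
    have := h0.symm
    rwa [add_zero, neg_eq_zero] at this
  refine Eq.trans (Finset.sum_congr rfl fun mk hmk => ?_) hsum
  rw [coeff_X_mul']
  by_cases hcase : mk.1 + mk.2 = u
  · have hidx : M - u + mk.1 + mk.2 = M := by omega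
    rw [hidx, if_pos hcase, if_pos, add_tsub_cancel_right]
    · rw [Finsupp.mem_support_iff]
      have : (τ' + Finsupp.single M 1 : ℤ →₀ ℕ) M = τ' M + 1 := by
        simp [Finsupp.add_apply]
      omega
  · rw [if_neg hcase]
    split_ifs with hmem
    · rw [coeff_pderiv_pderiv]
      have hMne : M - u + mk.1 + mk.2 ≠ M := by omega
      have hz : coeff (τ' + Finsupp.single M 1 - Finsupp.single (M - u + mk.1 + mk.2) 1
          + Finsupp.single mk.1 1 + Finsupp.single mk.2 1) q = 0 := by
        refine coeff_eq_zero_of_not_mem_vars hM ?_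
        have hv : (τ' + Finsupp.single M 1 - Finsupp.single (M - u + mk.1 + mk.2) 1
            + Finsupp.single mk.1 1 + Finsupp.single mk.2 1 : ℤ →₀ ℕ) M
            = (τ' M + 1 - (Finsupp.single (M - u + mk.1 + mk.2) 1 : ℤ →₀ ℕ) M)
              + (Finsupp.single mk.1 1 : ℤ →₀ ℕ) M + (Finsupp.single mk.2 1 : ℤ →₀ ℕ) M := by
          simp [Finsupp.add_apply, Finsupp.tsub_apply]
        have hs0 : (Finsupp.single (M - u + mk.1 + mk.2) 1 : ℤ →₀ ℕ) M = 0 :=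
          Finsupp.single_eq_of_ne' hMne
        omega
      rw [hz, mul_zero]
    · rfl

lemma key {J : ℂ} (hJ : J ≠ 0) {q : RSpace} (hE : ∀ n, Eop J n q = 0) :
    ∀ σ : ℤ →₀ ℕ, σ ≠ 0 → coeff σ q = 0 := by
  intro σ hσ
  obtain ⟨t, ht⟩ : ∃ t, σ t ≠ 0 := by
    by_contra hc
    push_neg at hc
    exact hσ (Finsupp.ext fun a => hc a)
  have hle : Finsupp.single t 1 ≤ σ := Finsupp.single_le_iff.2 (by omega)
  set τ := σ - Finsupp.single t 1 with hτdef
  have hστ : τ + Finsupp.single t 1 = σ := tsub_add_cancel_of_le hle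
  have h0 := Eop_coeff J (-t) q τ
  rw [hE, coeff_zero, neg_neg, hστ] at h0
  have hsum : (∑ mk ∈ q.vars ×ˢ q.vars,
      coeff τ (X (-t + mk.1 + mk.2) * pderiv mk.1 (pderiv mk.2 q))) = 0 := by
    have hterm : ∀ mk ∈ q.vars ×ˢ q.vars,
        coeff τ (X (-t + mk.1 + mk.2) * pderiv mk.1 (pderiv mk.2 q))
          = ∑ s ∈ τ.support,
              if mk.1 + mk.2 = t + s then
                coeff (τ - Finsupp.single s 1) (pderiv mk.1 (pderiv mk.2 q)) else 0 := by
      intro mk _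
      rw [coeff_X_mul']
      have hrw : ∀ s ∈ τ.support,
          (if mk.1 + mk.2 = t + s then
              coeff (τ - Finsupp.single s 1) (pderiv mk.1 (pderiv mk.2 q)) else 0)
            = (if s = -t + mk.1 + mk.2 then
              coeff (τ - Finsupp.single s 1) (pderiv mk.1 (pderiv mk.2 q)) else 0) := by
        intro s _
        exact if_congr (by omega) rfl rfl
      rw [Finset.sum_congr rfl hrw, Finset.sum_ite_eq' τ.support (-t + mk.1 + mk.2)
        (fun s => coeff (τ - Finsupp.single s 1) (pderiv mk.1 (pderiv mk.2 q)))]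
    rw [Finset.sum_congr rfl hterm, Finset.sum_comm]
    exact Finset.sum_eq_zero fun s _ => claim1 hE (τ - Finsupp.single s 1) (t + s)
  rw [hsum, neg_zero, zero_add] at h0
  have h0' : J * ((τ t : ℂ) + 1) * coeff σ q = 0 := h0.symm
  rcases mul_eq_zero.1 h0' with h | h
  · rcases mul_eq_zero.1 h with h' | h'
    · exact absurd h' hJ
    · exact absurd h' (by exact_mod_cast Nat.succ_ne_zero (τ t))
  · exact h

lemma finsum_mem_submodule {ι : Type*} (N : Submodule ℂ RSpace) (f : ι → RSpace)
    (h : ∀ i, f i ∈ N) : (∑ᶠ i, f i) ∈ N := by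
  by_cases hf : (Function.support f).Finite
  · rw [finsum_eq_sum f hf]
    exact Submodule.sum_mem N fun i _ => h i
  · rw [finsum_of_infinite_support hf]
    exact N.zero_mem

/-- constant coefficient as a linear map -/
noncomputable def ccLin : RSpace →ₗ[ℂ] ℂ where
  toFun p := coeff 0 p
  map_add' p q := coeff_add 0 p q
  map_smul' c p := coeff_smul 0 c p

lemma one_mem_of_const {N : Submodule ℂ RSpace} {p : RSpace} (hpN : p ∈ N) (hp0 : p ≠ 0)
    (hc : ∀ σ : ℤ →₀ ℕ, σ ≠ 0 → coeff σ p = 0) : (1 : RSpace) ∈ N := by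
  have hcc : coeff 0 p ≠ 0 := by
    by_contra hz
    apply hp0
    apply MvPolynomial.eq_zero_iff.2
    intro d
    by_cases hd : d = 0
    · rwa [hd]
    · exact hc d hd
  have hrw : (coeff 0 p)⁻¹ • p = 1 := by
    apply MvPolynomial.ext
    intro d
    rw [coeff_smul, coeff_one]
    by_cases hd : (0 : ℤ →₀ ℕ) = d
    · rw [← hd, if_pos rfl, smul_eq_mul, inv_mul_cancel₀ hcc]
    · rw [if_neg hd, hc d fun h => hd h.symm, smul_zero]
  rw [← hrw]
  exact N.smul_mem _ hpN


end BFaux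

open BFaux in
/-- the only subspaces of `R` invariant under all of the operators
`E_n, H_n, F_n` (`n ∈ ℤ`) are `{0}` and `R` if and only if `J ≠ 0`. -/
theorem irreducible_iff_J_ne_zero (J : ℂ) :
    (∀ N : Submodule ℂ RSpace,
      (∀ n : ℤ, ∀ q ∈ N, Eop J n q ∈ N) →
      (∀ n : ℤ, ∀ q ∈ N, Hop J n q ∈ N) →
      (∀ n : ℤ, ∀ q ∈ N, Fop n q ∈ N) →
      N = ⊥ ∨ N = ⊤) ↔ J ≠ 0 := by
  constructor
  · intro h hJ0
    subst hJ0
    set N : Submodule ℂ RSpace := LinearMap.ker ccLin with hN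
    have hmem : ∀ p : RSpace, p ∈ N ↔ coeff 0 p = 0 := fun p => LinearMap.mem_ker
    have hXmem : ∀ (s : ℤ) (p : RSpace), X s * p ∈ N := by
      intro s p
      rw [hmem, coeff_X_mul']
      rw [if_neg (by simp)]
    have hE : ∀ n : ℤ, ∀ q ∈ N, Eop (0:ℂ) n q ∈ N := by
      intro n q _
      refine N.add_mem (N.neg_mem ?_) ?_
      · exact finsum_mem_submodule N _ fun mk => hXmem _ _
      · rw [zero_smul]; exact N.zero_mem
    have hH : ∀ n : ℤ, ∀ q ∈ N, Hop (0:ℂ) n q ∈ N := by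
      intro n q hq
      refine N.add_mem (N.neg_mem (N.smul_mem _ ?_)) ?_
      · exact finsum_mem_submodule N _ fun m => hXmem _ _
      · rw [ite_self, zero_smul]; exact N.zero_mem
    have hF : ∀ n : ℤ, ∀ q ∈ N, Fop n q ∈ N := by
      intro n q _
      exact hXmem _ _
    rcases h N hE hH hF with hbot | htop
    · have : X (0:ℤ) ∈ N := by
        have := hXmem 0 1
        rwa [mul_one] at this
      rw [hbot, Submodule.mem_bot] at this
      exact MvPolynomial.X_ne_zero _ this
    · have : (1 : RSpace) ∈ N := htop ▸ Submodule.mem_top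
      rw [hmem] at this
      simp [coeff_one] at this
  · intro hJ N hEinv hHinv hFinv
    by_cases hbot : N = ⊥
    · exact Or.inl hbot
    right
    obtain ⟨q, hqN, hq0⟩ := Submodule.exists_mem_ne_zero_of_ne_bot hbot
    have hone : (1 : RSpace) ∈ N := by
      have H : ∀ d : ℕ, ∀ p : RSpace, p ∈ N → p ≠ 0 → p.totalDegree ≤ d →
          (1 : RSpace) ∈ N := by
        intro d
        induction d with
        | zero =>
          intro p hpN hp0 hdeg
          have hE : ∀ n : ℤ, Eop J n p = 0 := by
            intro n
            by_contra hne
            have := totalDegree_Eop_lt hne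
            omega
          exact one_mem_of_const hpN hp0 (key hJ hE)
        | succ d ih =>
          intro p hpN hp0 hdeg
          by_cases hE : ∀ n : ℤ, Eop J n p = 0
          · exact one_mem_of_const hpN hp0 (key hJ hE)
          · push_neg at hE
            obtain ⟨n, hne⟩ := hE
            have hlt := totalDegree_Eop_lt hne
            exact ih (Eop J n p) (hEinv n p hpN) hne (by omega)
      exact H q.totalDegree q hqN hq0 le_rfl
    rw [Submodule.eq_top_iff']
    intro p
    induction p using MvPolynomial.induction_on with
    | C a =>
      have := N.smul_mem a hone
      rwa [smul_eq_C_mul, mul_one] at this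
    | add p r hp hr => exact N.add_mem hp hr
    | mul_X p n hp =>
      have := hFinv n p hp
      rw [Fop] at this
      rwa [mul_comm] at this
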